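/- Let n−k ≤ h ≤ n−2, 2 ≤ k ≤ n−1, X the set of k-arrangements of {1,...,n} ending in 1,2,...,(n−1−h), and T the set of neighbors of X in S_{n,k} − X. Then every vertex of S_{n,k} outside X ∪ T has at most one neighbor in T. -/
import Mathlib


open SimpleGraph

/-- `q` is a swap-neighbor of `p` in the (n,k)-star graph: it is obtained from `p`
by swapping the first digit with the `i`-th digit for some `i ≠ 0`. -/
def swapAdj {n k : ℕ} [NeZero k] (p q : Fin k ↪ Fin n) : Prop :=
  ∃ i : Fin k, i ≠ 0 ∧ q 0 = p i ∧ q i = p 0 ∧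
    ∀ j : Fin k, j ≠ 0 → j ≠ i → q j = p j

/-- `q` is an unswap-neighbor of `p`: obtained by replacing the first digit of `p`
by a symbol not occurring in `p`. -/
def unswapAdj {n k : ℕ} [NeZero k] (p q : Fin k ↪ Fin n) : Prop :=
  (∀ j : Fin k, j ≠ 0 → q j = p j) ∧ ∀ j : Fin k, q 0 ≠ p j

/-- The (n,k)-star graph `S_{n,k}` on the k-arrangements of an n-set. -/
def nkStar (n k : ℕ) [NeZero k] : SimpleGraph (Fin k ↪ Fin n) :=
  SimpleGraph.fromRel (fun p q => swapAdj p q ∨ unswapAdj p q)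

/-- The n-dimensional star graph `S_n` on permutations, adjacency by swapping the
first digit with the `i`-th digit, `i ≠ 0`. -/
def starGraph (n : ℕ) [NeZero n] : SimpleGraph (Equiv.Perm (Fin n)) :=
  SimpleGraph.fromRel (fun p q => ∃ i : Fin n, i ≠ 0 ∧ q = p * Equiv.swap 0 i)

/-- `T` is an h-vertex-cut: `G - T` is disconnected and has minimum degree at least `h`. -/
def IsHVertexCut {V : Type*} (G : SimpleGraph V) (h : ℕ) (T : Set V) : Prop :=
  ¬ (G.induce Tᶜ).Connected ∧ ∀ v, v ∉ T → h ≤ (G.neighborSet v \ T).ncard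

/-- The h-super connectivity `κ_s^{(h)}(G)`. -/
noncomputable def kappaS {V : Type*} (G : SimpleGraph V) (h : ℕ) : ℕ :=
  sInf {m | ∃ T : Set V, IsHVertexCut G h T ∧ T.ncard = m}

/-- `F` is an h-edge-cut: `G - F` is disconnected and has minimum degree at least `h`. -/
def IsHEdgeCut {V : Type*} (G : SimpleGraph V) (h : ℕ) (F : Set (Sym2 V)) : Prop :=
  F ⊆ G.edgeSet ∧ ¬ (G.deleteEdges F).Connected ∧
    ∀ v : V, h ≤ ((G.deleteEdges F).neighborSet v).ncard

/-- The h-super edge-connectivity `λ_s^{(h)}(G)`. -/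
noncomputable def lambdaS {V : Type*} (G : SimpleGraph V) (h : ℕ) : ℕ :=
  sInf {m | ∃ F : Set (Sym2 V), IsHEdgeCut G h F ∧ F.ncard = m}

/-- `G'` together with the projection `π` is a `t`-split graph of `G`: fibers of `π`
have size `t` and are independent, `π` is a graph homomorphism, and over each edge of
`G` the edges of `G'` form a perfect matching between the two fibers. -/
structure IsSplitGraph {V W : Type*} (G : SimpleGraph V) (t : ℕ)
    (G' : SimpleGraph W) (π : W → V) : Prop where
  fiber_card : ∀ v : V, Nat.card (π ⁻¹' {v}) = t
  indep : ∀ x y : W, π x = π y → ¬ G'.Adj x y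
  adj_map : ∀ x y : W, G'.Adj x y → G.Adj (π x) (π y)
  matching : ∀ (x : W) (v : V), G.Adj (π x) v → ∃! z : W, π z = v ∧ G'.Adj x z

/-- The prefix map sending a permutation of `{1,...,n}` to its length-`k` prefix. -/
def prefixMap (n k : ℕ) (hkn : k ≤ n) (p : Equiv.Perm (Fin n)) : Fin k ↪ Fin n :=
  (Fin.castLEEmb hkn).trans p.toEmbedding

/-- The set `X` of k-arrangements whose last `n-1-h` digits are `1,2,...,n-1-h` in order. -/
def lastFixed (n k h : ℕ) : Set (Fin k ↪ Fin n) :=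
  {u | ∀ i : Fin k, k - (n - 1 - h) ≤ i.val → (u i).val = i.val - (k - (n - 1 - h))}

section Aux

variable {n k h : ℕ} [NeZero k]

private lemma swapAdj_symm' {p q : Fin k ↪ Fin n} (hpq : swapAdj p q) : swapAdj q p := by
  obtain ⟨i, hi, h1, h2, h3⟩ := hpq
  exact ⟨i, hi, h2.symm, h1.symm, fun j hj hji => (h3 j hj hji).symm⟩

private lemma adj_structure' {w t : Fin k ↪ Fin n} (hadj : (nkStar n k).Adj w t) :
    (∀ j : Fin k, j ≠ 0 → t j = w j) ∨
    (∃ a : Fin k, a ≠ 0 ∧ t 0 = w a ∧ t a = w 0 ∧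
      ∀ j : Fin k, j ≠ 0 → j ≠ a → t j = w j) := by
  rw [nkStar, fromRel_adj] at hadj
  obtain ⟨-, hR | hR⟩ := hadj
  · rcases hR with ⟨i, hi, h1, h2, h3⟩ | ⟨h1, -⟩
    · exact Or.inr ⟨i, hi, h1, h2, h3⟩
    · exact Or.inl h1
  · rcases hR with hs | ⟨h1, -⟩
    · obtain ⟨i, hi, h1, h2, h3⟩ := swapAdj_symm' hs
      exact Or.inr ⟨i, hi, h1, h2, h3⟩
    · exact Or.inl (fun j hj => (h1 j hj).symm)

private lemma T_struct' (hs1 : 1 ≤ k - (n - 1 - h)) {t u : Fin k ↪ Fin n}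
    (ht : t ∉ lastFixed n k h) (hu : u ∈ lastFixed n k h)
    (hadj : (nkStar n k).Adj u t) :
    ∃ i : Fin k, k - (n - 1 - h) ≤ i.val ∧ (t 0).val = i.val - (k - (n - 1 - h)) ∧
      (∀ j : Fin k, k - (n - 1 - h) ≤ j.val → j ≠ i →
        (t j).val = j.val - (k - (n - 1 - h))) ∧
      (t i).val ≠ i.val - (k - (n - 1 - h)) := by
  simp only [lastFixed, Set.mem_setOf_eq] at ht hu
  have hne0 : ∀ j : Fin k, k - (n - 1 - h) ≤ j.val → j ≠ 0 := by
    intro j hj e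
    subst e
    rw [Fin.val_zero] at hj
    omega
  rcases adj_structure' hadj with h1 | ⟨a, ha0, h1, h2, h3⟩
  · exact absurd (fun j hj => by rw [h1 j (hne0 j hj)]; exact hu j hj) ht
  · rcases lt_or_ge a.val (k - (n - 1 - h)) with has | has
    · refine absurd (fun j hj => ?_) ht
      have hja : j ≠ a := by
        intro e; subst e; omega
      rw [h3 j (hne0 j hj) hja]; exact hu j hj
    · refine ⟨a, has, ?_, ?_, ?_⟩
      · rw [h1]; exact hu a has
      · intro j hj hja
        rw [h3 j (hne0 j hj) hja]; exact hu j hj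
      · intro hcon
        refine ht (fun j hj => ?_)
        by_cases hja : j = a
        · subst hja; exact hcon
        · rw [h3 j (hne0 j hj) hja]; exact hu j hj

private lemma neighbor_form (hs1 : 1 ≤ k - (n - 1 - h)) {w t : Fin k ↪ Fin n}
    (hw : w ∉ lastFixed n k h) (ht : t ∉ lastFixed n k h)
    {u : Fin k ↪ Fin n} (hu : u ∈ lastFixed n k h) (hut : (nkStar n k).Adj u t)
    (hadj : (nkStar n k).Adj w t) :
    (∃ i : Fin k, k - (n-1-h) ≤ i.val ∧
        (∀ j : Fin k, k-(n-1-h) ≤ j.val → j ≠ i → (w j).val = j.val - (k-(n-1-h))) ∧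
        (w i).val ≠ i.val - (k-(n-1-h)) ∧
        (t 0).val = i.val - (k-(n-1-h)) ∧ (∀ j : Fin k, j ≠ 0 → t j = w j)) ∨
    (∃ i a : Fin k, k-(n-1-h) ≤ i.val ∧
        (∀ j : Fin k, k-(n-1-h) ≤ j.val → j ≠ i → (w j).val = j.val - (k-(n-1-h))) ∧
        (w i).val ≠ i.val - (k-(n-1-h)) ∧ a ≠ 0 ∧
        t 0 = w a ∧ (t 0).val = i.val - (k-(n-1-h)) ∧ t a = w 0 ∧
        (∀ j : Fin k, j ≠ 0 → j ≠ a → t j = w j)) ∨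
    (∃ i a : Fin k, k-(n-1-h) ≤ i.val ∧ k-(n-1-h) ≤ a.val ∧ i ≠ a ∧
        (w 0).val = a.val - (k-(n-1-h)) ∧ (w a).val = i.val - (k-(n-1-h)) ∧
        (∀ j : Fin k, k-(n-1-h) ≤ j.val → j ≠ i → j ≠ a → (w j).val = j.val - (k-(n-1-h))) ∧
        (w i).val ≠ i.val - (k-(n-1-h)) ∧
        t 0 = w a ∧ t a = w 0 ∧ (∀ j : Fin k, j ≠ 0 → j ≠ a → t j = w j)) := by
  obtain ⟨i, his, ht0, htj, hti⟩ := T_struct' hs1 ht hu hut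
  have hne0 : ∀ j : Fin k, k - (n - 1 - h) ≤ j.val → j ≠ 0 := by
    intro j hj e
    subst e
    rw [Fin.val_zero] at hj
    omega
  have hi0 : i ≠ 0 := hne0 i his
  rcases adj_structure' hadj with h1 | ⟨a, ha0, h1, h2, h3⟩
  · left
    refine ⟨i, his, fun j hj hji => ?_, ?_, ht0, h1⟩
    · rw [← h1 j (hne0 j hj)]; exact htj j hj hji
    · rw [← h1 i hi0]; exact hti
  · rcases lt_or_ge a.val (k - (n - 1 - h)) with has | has
    · right; left
      have hia : i ≠ a := by intro e; subst e; omega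
      refine ⟨i, a, his, fun j hj hji => ?_, ?_, ha0, h1, ht0, h2, h3⟩
      · have hja : j ≠ a := by intro e; subst e; omega
        rw [← h3 j (hne0 j hj) hja]; exact htj j hj hji
      · rw [← h3 i hi0 hia]; exact hti
    · by_cases hai : a = i
      · subst hai
        exfalso
        refine hw (fun j hj => ?_)
        by_cases hja : j = a
        · subst hja
          rw [← h1]; exact ht0
        · rw [← h3 j (hne0 j hj) hja]; exact htj j hj hja
      · right; right
        refine ⟨i, a, his, has, fun e => hai e.symm, ?_, ?_, ?_, ?_, h1, h2, h3⟩
        · rw [← h2]; exact htj a has hai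
        · rw [← h1]; exact ht0
        · intro j hj hji hja
          rw [← h3 j (hne0 j hj) hja]; exact htj j hj hji
        · rw [← h3 i hi0 (fun e => hai e.symm)]; exact hti

private lemma unique_nb (hs1 : 1 ≤ k - (n - 1 - h)) {w t1 t2 : Fin k ↪ Fin n}
    (hw : w ∉ lastFixed n k h)
    (ht1 : t1 ∉ lastFixed n k h) {u1 : Fin k ↪ Fin n} (hu1 : u1 ∈ lastFixed n k h)
    (hu1t : (nkStar n k).Adj u1 t1) (ha1 : (nkStar n k).Adj w t1)
    (ht2 : t2 ∉ lastFixed n k h) {u2 : Fin k ↪ Fin n} (hu2 : u2 ∈ lastFixed n k h)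
    (hu2t : (nkStar n k).Adj u2 t2) (ha2 : (nkStar n k).Adj w t2) :
    t1 = t2 := by
  set s := k - (n - 1 - h) with hs
  -- uniqueness of the defect
  have UDeq : ∀ i1 i2 : Fin k, s ≤ i2.val →
      (∀ j : Fin k, s ≤ j.val → j ≠ i1 → (w j).val = j.val - s) →
      (w i2).val ≠ i2.val - s → i2 = i1 := by
    intro i1 i2 hi2 hcor hdef
    by_contra e
    exact hdef (hcor i2 hi2 e)
  -- a unique-defect form excludes form C
  have noUDC : ∀ i1 ic ac : Fin k,
      (∀ j : Fin k, s ≤ j.val → j ≠ i1 → (w j).val = j.val - s) →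
      s ≤ ic.val → s ≤ ac.val → ic ≠ ac → (w ac).val = ic.val - s →
      (w ic).val ≠ ic.val - s → False := by
    intro i1 ic ac hcor hics hacs hne hwa hdef
    have hic : ic = i1 := UDeq i1 ic hics hcor hdef
    have hvne : ic.val ≠ ac.val := fun e2 => hne (Fin.ext e2)
    have hac : ac = i1 := by
      by_contra e
      have := hcor ac hacs e
      omega
    exact hne (hic.trans hac.symm)
  have F1 := neighbor_form hs1 hw ht1 hu1 hu1t ha1
  have F2 := neighbor_form hs1 hw ht2 hu2 hu2t ha2
  rcases F1 with ⟨i1, hi1s, hc1, hd1, ht10, he1⟩ |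
      ⟨i1, a1, hi1s, hc1, hd1, ha10, ht1a, ht10, ht1w, he1⟩ |
      ⟨i1, a1, hi1s, ha1s, hia1, hw01, hwa1, hc1, hd1, ht1a, ht1w, he1⟩ <;>
    rcases F2 with ⟨i2, hi2s, hc2, hd2, ht20, he2⟩ |
      ⟨i2, a2, hi2s, hc2, hd2, ha20, ht2a, ht20, ht2w, he2⟩ |
      ⟨i2, a2, hi2s, ha2s, hia2, hw02, hwa2, hc2, hd2, ht2a, ht2w, he2⟩
  -- A A
  · have hii : i2 = i1 := UDeq i1 i2 hi2s hc1 hd2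
    refine DFunLike.ext t1 t2 (fun j => ?_)
    by_cases hj0 : j = 0
    · subst hj0
      exact Fin.ext (by rw [ht10, ht20, hii])
    · rw [he1 j hj0, he2 j hj0]
  -- A B
  · exfalso
    have hii : i2 = i1 := UDeq i1 i2 hi2s hc1 hd2
    have h00 : t1 0 = t2 0 := Fin.ext (by rw [ht10, ht20, hii])
    have : t1 a2 = t1 0 := by rw [he1 a2 ha20, h00, ht2a]
    exact ha20 (t1.injective this)
  -- A C
  · exact absurd (noUDC i1 i2 a2 hc1 hi2s ha2s hia2 hwa2 hd2) not_false
  -- B A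
  · exfalso
    have hii : i1 = i2 := UDeq i2 i1 hi1s hc2 hd1
    have h00 : t2 0 = t1 0 := Fin.ext (by rw [ht10, ht20, hii])
    have : t2 a1 = t2 0 := by rw [he2 a1 ha10, h00, ht1a]
    exact ha10 (t2.injective this)
  -- B B
  · have hii : i2 = i1 := UDeq i1 i2 hi2s hc1 hd2
    have h00 : t1 0 = t2 0 := Fin.ext (by rw [ht10, ht20, hii])
    have haa : a1 = a2 := w.injective (by rw [← ht1a, ← ht2a, h00])
    refine DFunLike.ext t1 t2 (fun j => ?_)
    by_cases hj0 : j = 0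
    · subst hj0; exact h00
    · by_cases hja : j = a1
      · subst hja; rw [ht1w, haa, ht2w]
      · rw [he1 j hj0 hja, he2 j hj0 (haa ▸ hja)]
  -- B C
  · exact absurd (noUDC i1 i2 a2 hc1 hi2s ha2s hia2 hwa2 hd2) not_false
  -- C A
  · exact absurd (noUDC i2 i1 a1 hc2 hi1s ha1s hia1 hwa1 hd1) not_false
  -- C B
  · exact absurd (noUDC i2 i1 a1 hc2 hi1s ha1s hia1 hwa1 hd1) not_false
  -- C C
  · have haa : a1 = a2 := Fin.ext (by omega)
    have hii : i1 = i2 := by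
      refine Fin.ext ?_
      have : (w a1).val = (w a2).val := by rw [haa]
      omega
    refine DFunLike.ext t1 t2 (fun j => ?_)
    by_cases hj0 : j = 0
    · subst hj0; rw [ht1a, ht2a, haa]
    · by_cases hja : j = a1
      · subst hja; rw [ht1w, haa, ht2w]
      · rw [he1 j hj0 hja, he2 j hj0 (haa ▸ hja)]

end Aux

/-- every vertex outside `X ∪ T` has at most one neighbor in `T`,
where `T` is the set of neighbors of `X` outside `X`. -/
theorem at_most_one_neighbor_in_T (n k h : ℕ) (hk2 : 2 ≤ k) (hk : k ≤ n - 1)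
    (h1 : n - k ≤ h) (h2 : h ≤ n - 2) :
    ∀ w : Fin k ↪ Fin n, w ∉ lastFixed n k h →
      w ∉ {v | v ∉ lastFixed n k h ∧
              ∃ u ∈ lastFixed n k h, (@nkStar n k ⟨by omega⟩).Adj u v} →
      ((@nkStar n k ⟨by omega⟩).neighborSet w ∩
          {v | v ∉ lastFixed n k h ∧
              ∃ u ∈ lastFixed n k h, (@nkStar n k ⟨by omega⟩).Adj u v}).ncard ≤ 1 := by
  haveI : NeZero k := ⟨by omega⟩
  intro w hw _
  have hs1 : 1 ≤ k - (n - 1 - h) := by omega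
  have hss : (((nkStar n k).neighborSet w) ∩
      {v | v ∉ lastFixed n k h ∧
          ∃ u ∈ lastFixed n k h, (nkStar n k).Adj u v}).Subsingleton := by
    rintro t1 ⟨hn1, ht1X, u1, hu1, hu1t⟩ t2 ⟨hn2, ht2X, u2, hu2, hu2t⟩
    exact unique_nb hs1 hw ht1X hu1 hu1t hn1 ht2X hu2 hu2t hn2
  rcases hss.eq_empty_or_singleton with he | ⟨x, he⟩ <;> rw [he] <;> simp
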